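/- Let h : ℝ² → ℝ² be a lift of a torus homeomorphism homotopic to the identity whose rotation set has nonempty interior in ℝ². Then for every nonzero u ∈ ℝ², the deviation of h in direction u is unbounded. -/

import Mathlib

open Filter Topology MeasureTheory

noncomputable section

/-- The plane ℝ². -/
abbrev V2 : Type := ℝ × ℝ

/-- Euclidean dot product on ℝ². -/
def dot (x y : V2) : ℝ := x.1 * y.1 + x.2 * y.2

/-- Euclidean norm on ℝ². -/
def nrm (x : V2) : ℝ := Real.sqrt (dot x x)

/-- v^⊥ = (−v₂, v₁). -/
def perp (v : V2) : V2 := (-v.2, v.1)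

/-- Inclusion of ℤ² into ℝ². -/
def intVec (u : ℤ × ℤ) : V2 := ((u.1 : ℝ), (u.2 : ℝ))

/-- `f` is a lift of a torus map: it commutes with all integer translations. -/
def IsLift (f : V2 → V2) : Prop := ∀ (z : V2) (u : ℤ × ℤ), f (z + intVec u) = f z + intVec u

/-- The Misiurewicz–Ziemian rotation set of `f`. -/
def RotSet (f : V2 → V2) : Set V2 :=
  {v | ∃ (n : ℕ → ℕ) (x : ℕ → V2), Tendsto n atTop atTop ∧
    Tendsto (fun i => ((n i : ℝ))⁻¹ • (f^[n i] (x i) - x i)) atTop (𝓝 v)}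

lemma dot_sub (x y u : V2) : dot (x - y) u = dot x u - dot y u := by
  simp [dot]; ring

lemma dot_smul (c : ℝ) (x u : V2) : dot (c • x) u = c * dot x u := by
  simp [dot]; ring

lemma dot_add (x y u : V2) : dot (x + y) u = dot x u + dot y u := by
  simp [dot]; ring

lemma dot_zero (u : V2) : dot 0 u = 0 := by simp [dot]

lemma dot_cont (u : V2) : Continuous (fun x : V2 => dot x u) := by
  unfold dot; fun_prop

lemma dot_self_pos {u : V2} (hu : u ≠ 0) : 0 < dot u u := by
  have : u.1 ≠ 0 ∨ u.2 ≠ 0 := by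
    by_contra hc; push_neg at hc
    exact hu (Prod.ext hc.1 hc.2)
  rcases this with h1 | h2
  · exact add_pos_of_pos_of_nonneg (mul_self_pos.2 h1) (mul_self_nonneg _)
  · exact add_pos_of_nonneg_of_pos (mul_self_nonneg _) (mul_self_pos.2 h2)


/-- If the rotation set of h has nonempty interior, then the deviation of h in every
nonzero direction u is unbounded. -/
theorem stmt3 (h : Equiv.Perm V2) (hh : Continuous ⇑h) (hh' : Continuous ⇑h.symm)
    (hlift : IsLift ⇑h) (hint : (interior (RotSet ⇑h)).Nonempty)
    (u : V2) (hu : u ≠ 0) :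
    ∀ M > 0, ∃ (n : ℤ) (x y : V2),
      |dot (((h ^ n) x - x) - ((h ^ n) y - y)) u| / nrm u > M := by
  by_contra hcon
  push_neg at hcon
  obtain ⟨M, hM, hbd⟩ := hcon
  have hdd : 0 < dot u u := dot_self_pos hu
  have hnrm : 0 < nrm u := Real.sqrt_pos.mpr hdd
  set K := M * nrm u with hKdef
  have hK0 : 0 < K := mul_pos hM hnrm
  -- deviation bound for natural iterates
  have hdev : ∀ (n : ℕ) (x y : V2),
      |dot (((⇑h)^[n] x - x) - ((⇑h)^[n] y - y)) u| ≤ K := by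
    intro n x y
    have := hbd (n : ℤ) x y
    rw [div_le_iff₀ hnrm] at this
    rwa [zpow_natCast, Equiv.Perm.coe_pow] at this
  set d : ℕ → ℝ := fun n => dot ((⇑h)^[n] 0) u with hd
  -- quasi-additivity
  have hq : ∀ n m : ℕ, |d (n + m) - d n - d m| ≤ K := by
    intro n m
    have hit : (⇑h)^[n + m] (0 : V2) = (⇑h)^[m] ((⇑h)^[n] 0) := by
      rw [add_comm, Function.iterate_add_apply]
    have key : d (n + m) - d n - d m
        = dot (((⇑h)^[m] ((⇑h)^[n] 0) - (⇑h)^[n] 0) - ((⇑h)^[m] 0 - 0)) u := by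
      simp only [hd, hit, dot_sub, dot_zero]
      ring
    rw [key]
    exact hdev m _ 0
  -- multiples
  have hmul : ∀ (n k : ℕ), |d (k * n) - (k : ℝ) * d n| ≤ (k : ℝ) * K := by
    intro n k
    induction k with
    | zero => simp [hd, dot_zero]
    | succ k ih =>
      have h1 := hq (k * n) n
      have : (k + 1) * n = k * n + n := by ring
      rw [this]
      push_cast
      have := abs_add_le (d (k * n + n) - d (k * n) - d n) (d (k * n) - (k : ℝ) * d n)
      calc |d (k * n + n) - ((k : ℝ) + 1) * d n|
          = |(d (k * n + n) - d (k * n) - d n) + (d (k * n) - (k : ℝ) * d n)| := by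
            ring_nf
        _ ≤ |d (k * n + n) - d (k * n) - d n| + |d (k * n) - (k : ℝ) * d n| := abs_add_le _ _
        _ ≤ K + (k : ℝ) * K := add_le_add h1 ih
        _ = ((k : ℝ) + 1) * K := by ring
  -- comparison of ratios
  have hratio : ∀ n m : ℕ, 1 ≤ n → 1 ≤ m →
      |d n / n - d m / m| ≤ K / n + K / m := by
    intro n m hn hm
    have hn' : (0:ℝ) < n := by exact_mod_cast hn
    have hm' : (0:ℝ) < m := by exact_mod_cast hm
    have h1 := hmul n m
    have h2 := hmul m n
    have h3 : |(m : ℝ) * d n - (n : ℝ) * d m| ≤ (m : ℝ) * K + (n : ℝ) * K := by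
      have hnmmn : (n : ℕ) * m = m * n := by ring
      calc |(m : ℝ) * d n - (n : ℝ) * d m|
          = |(d (n * m) - (n : ℝ) * d m) - (d (m * n) - (m : ℝ) * d n)| := by
            rw [hnmmn]; ring_nf
        _ ≤ |d (n * m) - (n : ℝ) * d m| + |d (m * n) - (m : ℝ) * d n| := abs_sub _ _
        _ ≤ (n : ℝ) * K + (m : ℝ) * K := add_le_add h2 h1
        _ = (m : ℝ) * K + (n : ℝ) * K := by ring
    have heq : d n / n - d m / m = ((m : ℝ) * d n - (n : ℝ) * d m) / (n * m) := by
      field_simp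
    rw [heq, abs_div, abs_of_pos (mul_pos hn' hm')]
    rw [div_le_iff₀ (mul_pos hn' hm')]
    have : (K / n + K / m) * ((n:ℝ) * m) = (m : ℝ) * K + (n : ℝ) * K := by
      field_simp
    rw [this]
    exact h3
  -- every rotation vector's dot with u is approximated by d n / n
  have hrot : ∀ v ∈ RotSet ⇑h, ∀ ε > 0, ∃ n : ℕ, 1 ≤ n ∧ K / n ≤ ε ∧
      |dot v u - d n / n| ≤ ε := by
    intro v hv ε hε
    obtain ⟨ns, xs, hns, hlim⟩ := hv
    have hlim2 : Tendsto (fun i => dot (((ns i : ℝ))⁻¹ • ((⇑h)^[ns i] (xs i) - xs i)) u)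
        atTop (𝓝 (dot v u)) := ((dot_cont u).tendsto v).comp hlim
    obtain ⟨N, hN⟩ := exists_nat_ge (K / (ε / 2))
    have hNbig : ∀ᶠ i in atTop, ns i ≥ max N 1 := hns.eventually_ge_atTop _
    have hclose : ∀ᶠ i in atTop,
        |dot (((ns i : ℝ))⁻¹ • ((⇑h)^[ns i] (xs i) - xs i)) u - dot v u| < ε / 2 := by
      have := hlim2
      rw [Metric.tendsto_atTop] at this
      obtain ⟨N0, hN0⟩ := this (ε / 2) (by linarith)
      filter_upwards [eventually_ge_atTop N0] with i hi
      have := hN0 i hi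
      rwa [Real.dist_eq] at this
    obtain ⟨i, hi1, hi2⟩ := (hNbig.and hclose).exists
    refine ⟨ns i, le_trans (le_max_right _ _) hi1, ?_, ?_⟩
    · -- K / ns i ≤ ε
      have hNle : (N : ℝ) ≤ ns i := by exact_mod_cast le_trans (le_max_left _ _) hi1
      have hns1 : (1:ℝ) ≤ ns i := by exact_mod_cast le_trans (le_max_right _ _) hi1
      have hNpos : (0:ℝ) < ns i := by linarith
      rw [div_le_iff₀ hNpos]
      have : K ≤ (ε / 2) * N := by
        rw [div_le_iff₀ (by linarith : (0:ℝ) < ε / 2)] at hN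
        linarith
      calc K ≤ (ε / 2) * N := this
        _ ≤ ε * ns i := by nlinarith
    · -- |dot v u - d (ns i) / ns i| ≤ ε
      set n := ns i
      have hns1 : (1:ℝ) ≤ n := by exact_mod_cast le_trans (le_max_right _ _) hi1
      have hnpos : (0:ℝ) < n := by linarith
      have hNle : (N : ℝ) ≤ n := by exact_mod_cast le_trans (le_max_left _ _) hi1
      have hKn : K / n ≤ ε / 2 := by
        rw [div_le_iff₀ hnpos]
        have : K ≤ (ε / 2) * N := by
          rw [div_le_iff₀ (by linarith : (0:ℝ) < ε / 2)] at hN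
          linarith
        calc K ≤ (ε/2) * N := this
          _ ≤ ε / 2 * n := by nlinarith
      have hdn : |dot ((⇑h)^[n] (xs i) - xs i) u - d n| ≤ K := by
        have := hdev n (xs i) 0
        have h0 : ((⇑h)^[n] (0:V2) - 0) = (⇑h)^[n] 0 := sub_zero _
        rw [show ((⇑h)^[n] (xs i) - xs i) - ((⇑h)^[n] (0:V2) - 0)
              = ((⇑h)^[n] (xs i) - xs i) - ((⇑h)^[n] 0 - 0) from rfl] at this
        calc |dot ((⇑h)^[n] (xs i) - xs i) u - d n|
            = |dot (((⇑h)^[n] (xs i) - xs i) - ((⇑h)^[n] 0 - 0)) u| := by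
              rw [dot_sub]; simp [hd, dot_sub, dot_zero]
          _ ≤ K := this
      have hdn2 : |(↑n : ℝ)⁻¹ * dot ((⇑h)^[n] (xs i) - xs i) u - d n / n| ≤ K / n := by
        rw [div_eq_inv_mul, div_eq_inv_mul, ← mul_sub, abs_mul,
          abs_of_pos (inv_pos.mpr hnpos)]
        exact mul_le_mul_of_nonneg_left hdn (le_of_lt (inv_pos.mpr hnpos))
      have hsmul : dot (((n : ℝ))⁻¹ • ((⇑h)^[n] (xs i) - xs i)) u
          = ((n:ℝ))⁻¹ * dot ((⇑h)^[n] (xs i) - xs i) u := dot_smul _ _ _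
      rw [hsmul] at hi2
      calc |dot v u - d n / n|
          ≤ |dot v u - (↑n : ℝ)⁻¹ * dot ((⇑h)^[n] (xs i) - xs i) u|
            + |(↑n:ℝ)⁻¹ * dot ((⇑h)^[n] (xs i) - xs i) u - d n / n| := abs_sub_le _ _ _
        _ ≤ ε / 2 + K / n := by
            refine add_le_add ?_ hdn2
            rw [abs_sub_comm]; exact le_of_lt hi2
        _ ≤ ε := by linarith
  -- two rotation vectors have equal dot with u
  have heq : ∀ v ∈ RotSet ⇑h, ∀ w ∈ RotSet ⇑h, dot v u = dot w u := by
    intro v hv w hw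
    have key : ∀ ε > 0, |dot v u - dot w u| ≤ ε := by
      intro ε hε
      obtain ⟨n, hn1, hn2, hn3⟩ := hrot v hv (ε/4) (by linarith)
      obtain ⟨m, hm1, hm2, hm3⟩ := hrot w hw (ε/4) (by linarith)
      have h5 := hratio n m hn1 hm1
      calc |dot v u - dot w u|
          ≤ |dot v u - d n / n| + |d n / n - dot w u| := abs_sub_le _ _ _
        _ ≤ |dot v u - d n / n| + (|d n / n - d m / m| + |d m / m - dot w u|) := by
            linarith [abs_sub_le (d n / (n:ℝ)) (d m / (m:ℝ)) (dot w u)]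
        _ ≤ ε/4 + ((K/n + K/m) + ε/4) := by
            refine add_le_add hn3 (add_le_add h5 ?_)
            rw [abs_sub_comm]; exact hm3
        _ ≤ ε := by linarith
    by_contra hne
    have habs : 0 < |dot v u - dot w u| := abs_pos.mpr (sub_ne_zero.mpr hne)
    have := key (|dot v u - dot w u| / 2) (by linarith)
    linarith
  -- derive contradiction from nonempty interior
  obtain ⟨v, hv⟩ := hint
  have hvmem : v ∈ RotSet ⇑h := interior_subset hv
  obtain ⟨ε, hε, hball⟩ := Metric.mem_nhds_iff.mp (isOpen_interior.mem_nhds hv)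
  set t : ℝ := ε / (2 * (‖u‖ + 1)) with ht
  have hupos : (0:ℝ) < ‖u‖ + 1 := by positivity
  have htpos : 0 < t := by positivity
  have hmem2 : v + t • u ∈ RotSet ⇑h := by
    apply interior_subset
    apply hball
    rw [Metric.mem_ball, dist_eq_norm]
    have : v + t • u - v = t • u := by abel
    rw [this, norm_smul, Real.norm_eq_abs, abs_of_pos htpos]
    have : t * ‖u‖ < t * (‖u‖ + 1) := by nlinarith
    have h2 : t * (‖u‖ + 1) = ε / 2 := by
      rw [ht]; field_simp
    linarith
  have h3 := heq v hvmem (v + t • u) hmem2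
  rw [dot_add, dot_smul] at h3
  nlinarith
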